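/- If v ≡ 1 or 3 mod 6 and v > 3, and a Steiner triple system of order v has 3-rank at most v − 2, then v ≡ 0 mod 3; and if it has 2-rank at most v − 1, then it contains a proper Steiner subsystem of order (v−1)/2, so (v−1)/2 ≡ 1 or 3 mod 6. -/

import Mathlib

/-- A Steiner triple system. -/
def IsSTS {V : Type*} [DecidableEq V] (B : Finset (Finset V)) : Prop :=
  (∀ b ∈ B, b.card = 3) ∧
  ∀ p : Finset V, p.card = 2 → ∃! b, b ∈ B ∧ p ⊆ b

/-- The characteristic vector of a block, over GF(p). -/
def charVec (p v : ℕ) (b : Finset (Fin v)) : Fin v → ZMod p :=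
  fun j => if j ∈ b then 1 else 0

section Aux

variable {v : ℕ} {B : Finset (Finset (Fin v))}

lemma exists_third (hB : IsSTS B) {u w : Fin v} (h : u ≠ w) :
    ∃ t : Fin v, t ≠ u ∧ t ≠ w ∧ ({u, w, t} : Finset (Fin v)) ∈ B ∧
      ∀ b ∈ B, u ∈ b → w ∈ b → b = {u, w, t} := by
  obtain ⟨b, ⟨hbB, hsub⟩, huniq⟩ := hB.2 {u, w} (Finset.card_pair h)
  have hcard := hB.1 b hbB
  have h1 : (b \ {u, w}).card = 1 := by
    rw [Finset.card_sdiff_of_subset hsub, hcard, Finset.card_pair h]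
  obtain ⟨t, ht⟩ := Finset.card_eq_one.mp h1
  have htmem : t ∈ b \ ({u, w} : Finset (Fin v)) := ht ▸ Finset.mem_singleton_self t
  rw [Finset.mem_sdiff, Finset.mem_insert, Finset.mem_singleton] at htmem
  push_neg at htmem
  have hbeq : b = {u, w, t} := by
    have h2 : ({u, w} : Finset (Fin v)) ∪ b \ {u, w} = b :=
      Finset.union_sdiff_of_subset hsub
    rw [ht] at h2
    rw [← h2]
    ext z
    simp [or_assoc]
  refine ⟨t, htmem.2.1, htmem.2.2, hbeq ▸ hbB, ?_⟩
  intro b' hb' hub' hwb'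
  rw [← hbeq]
  exact huniq b' ⟨hb', Finset.insert_subset hub' (Finset.singleton_subset_iff.mpr hwb')⟩

noncomputable def thirdPt (B : Finset (Finset (Fin v))) (hB : IsSTS B) (u w : Fin v) : Fin v :=
  if h : u ≠ w then (exists_third hB h).choose else u

lemma thirdPt_spec (hB : IsSTS B) {u w : Fin v} (h : u ≠ w) :
    thirdPt B hB u w ≠ u ∧ thirdPt B hB u w ≠ w ∧
      ({u, w, thirdPt B hB u w} : Finset (Fin v)) ∈ B ∧
      ∀ b ∈ B, u ∈ b → w ∈ b → b = {u, w, thirdPt B hB u w} := by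
  simp only [thirdPt, dif_pos h]
  exact (exists_third hB h).choose_spec

lemma thirdPt_invol (hB : IsSTS B) {u w : Fin v} (h : u ≠ w) :
    thirdPt B hB u (thirdPt B hB u w) = w := by
  obtain ⟨h1, h2, h3, h4⟩ := thirdPt_spec hB h
  obtain ⟨g1, g2, g3, g4⟩ := thirdPt_spec hB (Ne.symm h1)
  have heq := g4 {u, w, thirdPt B hB u w} h3 (by simp) (by simp)
  have hw : w ∈ ({u, thirdPt B hB u w, thirdPt B hB u (thirdPt B hB u w)} : Finset (Fin v)) := by
    rw [← heq]; simp
  simp only [Finset.mem_insert, Finset.mem_singleton] at hw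
  rcases hw with hw | hw | hw
  · exact absurd hw.symm h
  · exact absurd hw.symm h2
  · exact hw.symm

lemma thirdPt_sum (hB : IsSTS B) {p : ℕ} {x : Fin v → ZMod p}
    (hx : ∀ b ∈ B, ∑ i ∈ b, x i = 0) {u w : Fin v} (h : u ≠ w) :
    x u + x w + x (thirdPt B hB u w) = 0 := by
  obtain ⟨h1, h2, h3, _⟩ := thirdPt_spec hB h
  have hs := hx _ h3
  rw [Finset.sum_insert (by simp [h, Ne.symm h1]),
    Finset.sum_insert (by simp [Ne.symm h2]), Finset.sum_singleton, ← add_assoc] at hs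
  exact hs

lemma card_fibers (hB : IsSTS B) {p : ℕ} {x : Fin v → ZMod p}
    (hx : ∀ b ∈ B, ∑ i ∈ b, x i = 0) (u : Fin v) (c d : ZMod p)
    (hcd : x u + c + d = 0) :
    (Finset.univ.filter fun w => w ≠ u ∧ x w = c).card
      = (Finset.univ.filter fun w => w ≠ u ∧ x w = d).card := by
  refine Finset.card_bij' (fun w _ => thirdPt B hB u w) (fun w _ => thirdPt B hB u w)
    ?_ ?_ ?_ ?_ <;> intro w hw <;>
    simp only [Finset.mem_filter, Finset.mem_univ, true_and] at hw ⊢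
  · have huw : u ≠ w := Ne.symm hw.1
    refine ⟨(thirdPt_spec hB huw).1, ?_⟩
    have hsum := thirdPt_sum hB hx huw
    rw [hw.2] at hsum
    linear_combination hsum - hcd
  · have huw : u ≠ w := Ne.symm hw.1
    refine ⟨(thirdPt_spec hB huw).1, ?_⟩
    have hsum := thirdPt_sum hB hx huw
    rw [hw.2] at hsum
    linear_combination hsum - hcd
  · exact thirdPt_invol hB (Ne.symm hw.1)
  · exact thirdPt_invol hB (Ne.symm hw.1)

lemma even_card_invol {α : Type*} [DecidableEq α] [LinearOrder α] (T : Finset α) (f : α → α)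
    (hmem : ∀ w ∈ T, f w ∈ T) (hinv : ∀ w ∈ T, f (f w) = w)
    (hne : ∀ w ∈ T, f w ≠ w) : Even T.card := by
  have hsplit : T = (T.filter fun w => w < f w) ∪ (T.filter fun w => f w < w) := by
    ext w
    simp only [Finset.mem_union, Finset.mem_filter]
    constructor
    · intro hw
      rcases lt_or_gt_of_ne (hne w hw).symm with h | h
      · exact Or.inl ⟨hw, h⟩
      · exact Or.inr ⟨hw, h⟩
    · rintro (⟨hw, _⟩ | ⟨hw, _⟩) <;> exact hw
  have hdisj : Disjoint (T.filter fun w => w < f w) (T.filter fun w => f w < w) := by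
    rw [Finset.disjoint_left]
    intro a h1 h2
    rw [Finset.mem_filter] at h1 h2
    exact absurd h2.2 (not_lt_of_gt h1.2)
  have hcard : (T.filter fun w => w < f w).card = (T.filter fun w => f w < w).card := by
    refine Finset.card_bij' (fun w _ => f w) (fun w _ => f w) ?_ ?_ ?_ ?_ <;>
      intro a ha <;> rw [Finset.mem_filter] at ha
    · rw [Finset.mem_filter]
      exact ⟨hmem a ha.1, by rw [hinv a ha.1]; exact ha.2⟩
    · rw [Finset.mem_filter]
      exact ⟨hmem a ha.1, by rw [hinv a ha.1]; exact ha.2⟩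
    · exact hinv a ha.1
    · exact hinv a ha.1
  rw [hsplit, Finset.card_union_of_disjoint hdisj, hcard]
  exact ⟨_, rfl⟩

end Aux

lemma exists_dual_vec (p v : ℕ) [Fact p.Prime] (S : Set (Fin v → ZMod p)) (k : ℕ)
    (hspan : Module.finrank (ZMod p) (Submodule.span (ZMod p) S) ≤ k) :
    ∃ O : Submodule (ZMod p) (Fin v → ZMod p),
      (∀ x ∈ O, ∀ s ∈ S, ∑ i, s i * x i = 0) ∧ v - k ≤ Module.finrank (ZMod p) O ∧
      (∀ y : Fin v → ZMod p, (∀ s ∈ S, ∑ i, s i * y i = 0) → y ∈ O) := by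
  set D : LinearMap.BilinForm (ZMod p) (Fin v → ZMod p) :=
    LinearMap.mk₂ (ZMod p) (fun x y => ∑ i, x i * y i)
      (fun a b c => by simp [add_mul, Finset.sum_add_distrib])
      (fun r a b => by simp [Finset.mul_sum, mul_assoc])
      (fun a b c => by simp [mul_add, Finset.sum_add_distrib])
      (fun r a b => by
        simp only [smul_eq_mul, Finset.mul_sum]
        exact Finset.sum_congr rfl fun i _ => by
          simp only [Pi.smul_apply, smul_eq_mul]; ring) with hD
  have happly : ∀ x y : Fin v → ZMod p, D x y = ∑ i, x i * y i := fun x y => rfl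
  have hrefl : D.IsRefl := by
    intro x y hxy
    show D y x = 0
    rw [happly] at hxy ⊢
    rw [← hxy]
    exact Finset.sum_congr rfl fun i _ => mul_comm _ _
  have hnd : D.Nondegenerate := by
    refine (LinearMap.IsRefl.nondegenerate_iff_separatingLeft hrefl).mpr ?_
    intro x hx
    funext i
    have hxi := hx (Pi.single i 1)
    rw [happly] at hxi
    simpa [Pi.single_apply, mul_ite, Finset.sum_ite_eq'] using hxi
  refine ⟨D.orthogonal (Submodule.span (ZMod p) S), ?_, ?_, ?_⟩
  · intro x hx s hs
    have := (LinearMap.BilinForm.mem_orthogonal_iff.mp hx) s (Submodule.subset_span hs)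
    rw [← happly]
    exact this
  · have hfr := LinearMap.BilinForm.finrank_orthogonal hnd (Submodule.span (ZMod p) S)
    have h2 : Module.finrank (ZMod p) (Fin v → ZMod p) = v := Module.finrank_fin_fun _
    rw [h2] at hfr
    omega
  · intro y hy
    rw [LinearMap.BilinForm.mem_orthogonal_iff]
    intro n hn
    show D n y = 0
    induction hn using Submodule.span_induction with
    | mem z hz => rw [happly]; exact hy z hz
    | zero => simp
    | add a b ha hb iha ihb => rw [map_add, LinearMap.add_apply, iha, ihb, add_zero]
    | smul r a ha iha => rw [map_smul, LinearMap.smul_apply, iha, smul_zero]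

/-- Let `v ≡ 1, 3 (mod 6)`, `v > 3`, and let `B` be an STS(v). If its 3-rank is
at most `v − 2` then `3 ∣ v`; and if its 2-rank is at most `v − 1` then it
contains a proper subsystem on `(v−1)/2` points, so `(v−1)/2 ≡ 1` or `3 (mod 6)`. -/
theorem nonfull_rank_consequences (v : ℕ) (hv : 3 < v)
    (hmod : v % 6 = 1 ∨ v % 6 = 3)
    (B : Finset (Finset (Fin v))) (hB : IsSTS B) :
    (Module.finrank (ZMod 3) (Submodule.span (ZMod 3) (charVec 3 v '' ↑B)) ≤ v - 2 →
      3 ∣ v) ∧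
    (Module.finrank (ZMod 2) (Submodule.span (ZMod 2) (charVec 2 v '' ↑B)) ≤ v - 1 →
      (∃ S' : Finset (Fin v), S'.card = (v - 1) / 2 ∧ S' ≠ Finset.univ ∧
        ∀ b ∈ B, 2 ≤ (b ∩ S').card → b ⊆ S') ∧
      ((v - 1) / 2 % 6 = 1 ∨ (v - 1) / 2 % 6 = 3)) := by
  have hv7 : 7 ≤ v := by omega
  constructor
  · -- Part 1: 3-rank
    intro hrk
    obtain ⟨O, hO1, hO2, hO3⟩ := exists_dual_vec 3 v (charVec 3 v '' ↑B) (v - 2) hrk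
    -- the all-ones vector lies in the orthogonal space
    have hjO : (fun _ => (1 : ZMod 3)) ∈ O := by
      apply hO3
      rintro s ⟨b, hb, rfl⟩
      have hb' : b ∈ B := hb
      have : ∑ i, charVec 3 v b i * (1 : ZMod 3) = ((b.card : ℕ) : ZMod 3) := by
        simp [charVec, Finset.sum_ite_mem]
      rw [this, hB.1 b hb']
      decide
    have hOrank : 2 ≤ Module.finrank (ZMod 3) O := by omega
    have hjne : (fun _ => (1 : ZMod 3)) ≠ (0 : Fin v → ZMod 3) := by
      intro h
      have := congrFun h ⟨0, by omega⟩
      exact one_ne_zero this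
    have hnotle : ¬ O ≤ Submodule.span (ZMod 3) {fun _ => (1 : ZMod 3)} := by
      intro hle
      have h1 := Submodule.finrank_mono hle
      rw [finrank_span_singleton hjne] at h1
      omega
    obtain ⟨x, hxO, hxj⟩ := SetLike.not_le_iff_exists.mp hnotle
    have hxblocks : ∀ b ∈ B, ∑ i ∈ b, x i = 0 := by
      intro b hb
      have h0 := hO1 x hxO (charVec 3 v b) ⟨b, hb, rfl⟩
      have e : ∑ i, charVec 3 v b i * x i = ∑ i ∈ b, x i := by
        simp [charVec, ite_mul, Finset.sum_ite_mem]
      rwa [e] at h0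
    -- x is nonconstant
    set i0 : Fin v := ⟨0, by omega⟩ with hi0
    obtain ⟨u, hu⟩ : ∃ u : Fin v, x u ≠ x i0 := by
      by_contra hcon
      push_neg at hcon
      apply hxj
      have hxc : x = x i0 • (fun _ => (1 : ZMod 3)) := funext fun i => by
        simp [hcon i]
      rw [hxc]
      exact Submodule.smul_mem _ _ (Submodule.mem_span_singleton_self _)
    set a := x i0 with ha
    -- fiber cardinalities
    have key : ∀ (u' : Fin v) (c d : ZMod 3), x u' + c + d = 0 → c ≠ x u' → d ≠ x u' →
        (Finset.univ.filter fun w => x w = c).card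
          = (Finset.univ.filter fun w => x w = d).card := by
      intro u' c d hcd hc hd
      have h1 := card_fibers hB hxblocks u' c d hcd
      have e1 : (Finset.univ.filter fun w => w ≠ u' ∧ x w = c)
          = Finset.univ.filter fun w => x w = c := by
        apply Finset.filter_congr
        intro w _
        simp only [ne_eq, and_iff_right_iff_imp]
        intro hwc hwu
        exact hc (hwu ▸ hwc).symm
      have e2 : (Finset.univ.filter fun w => w ≠ u' ∧ x w = d)
          = Finset.univ.filter fun w => x w = d := by
        apply Finset.filter_congr
        intro w _
        simp only [ne_eq, and_iff_right_iff_imp]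
        intro hwc hwu
        exact hd (hwu ▸ hwc).symm
      rw [← e1, ← e2]
      exact h1
    have h3zero : (3 : ZMod 3) = 0 := rfl
    have h12 : (Finset.univ.filter fun w => x w = a + 1).card
        = (Finset.univ.filter fun w => x w = a + 2).card := by
      refine key i0 (a + 1) (a + 2) (by rw [← ha]; linear_combination (a + 1) * h3zero) ?_ ?_
      · rw [← ha]; intro h; exact one_ne_zero (by linear_combination h)
      · rw [← ha]; intro h
        exact (by decide : (2 : ZMod 3) ≠ 0) (by linear_combination h)
    obtain ⟨u1, hu1⟩ : ∃ u1 : Fin v, x u1 = a + 1 := by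
      have hcase : x u = a + 1 ∨ x u = a + 2 :=
        (by decide : ∀ b a : ZMod 3, b ≠ a → b = a + 1 ∨ b = a + 2) _ _ hu
      rcases hcase with h | h
      · exact ⟨u, h⟩
      · have hpos : 0 < (Finset.univ.filter fun w => x w = a + 2).card :=
          Finset.card_pos.mpr ⟨u, by simp [h]⟩
        rw [← h12] at hpos
        obtain ⟨w, hw⟩ := Finset.card_pos.mp hpos
        rw [Finset.mem_filter] at hw
        exact ⟨w, hw.2⟩
    have h20 : (Finset.univ.filter fun w => x w = a + 2).card
        = (Finset.univ.filter fun w => x w = a).card := by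
      refine key u1 (a + 2) a (by rw [hu1]; linear_combination (a + 1) * h3zero) ?_ ?_
      · rw [hu1]; intro h; exact one_ne_zero (by linear_combination h)
      · rw [hu1]; intro h; exact one_ne_zero (by linear_combination -h)
    have hall : ∀ c : ZMod 3, (Finset.univ.filter fun w => x w = c).card
        = (Finset.univ.filter fun w => x w = a).card := by
      intro c
      rcases (by decide : ∀ c a : ZMod 3, c = a ∨ c = a + 1 ∨ c = a + 2) c a with h | h | h
      · rw [h]
      · rw [h, h12, h20]
      · rw [h, h20]
    have hsum : v = ∑ c : ZMod 3, (Finset.univ.filter fun w => x w = c).card := by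
      have := Finset.card_eq_sum_card_fiberwise
        (f := x) (s := Finset.univ) (t := Finset.univ) (fun y _ => Finset.mem_univ _)
      simpa using this
    rw [hsum]
    have : ∑ c : ZMod 3, (Finset.univ.filter fun w => x w = c).card
        = 3 * (Finset.univ.filter fun w => x w = a).card := by
      rw [Finset.sum_congr rfl fun c _ => hall c, Finset.sum_const]
      simp [ZMod.card]
    rw [this]
    exact Dvd.intro _ rfl
  · -- Part 2: 2-rank
    intro hrk
    obtain ⟨O, hO1, hO2, hO3⟩ := exists_dual_vec 2 v (charVec 2 v '' ↑B) (v - 1) hrk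
    have hObot : O ≠ ⊥ := by
      intro h
      rw [h, finrank_bot] at hO2
      omega
    obtain ⟨x, hxO, hx0⟩ := Submodule.exists_mem_ne_zero_of_ne_bot hObot
    have hxblocks : ∀ b ∈ B, ∑ i ∈ b, x i = 0 := by
      intro b hb
      have h0 := hO1 x hxO (charVec 2 v b) ⟨b, hb, rfl⟩
      have e : ∑ i, charVec 2 v b i * x i = ∑ i ∈ b, x i := by
        simp [charVec, ite_mul, Finset.sum_ite_mem]
      rwa [e] at h0
    obtain ⟨u, hu⟩ : ∃ u : Fin v, x u ≠ 0 := by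
      by_contra hcon
      push_neg at hcon
      exact hx0 (funext fun i => hcon i)
    have hu1 : x u = 1 := (by decide : ∀ c : ZMod 2, c ≠ 0 → c = 1) _ hu
    set S' : Finset (Fin v) := Finset.univ.filter (fun w => x w = (0 : ZMod 2)) with hS'
    -- subsystem property
    have hsub : ∀ b ∈ B, 2 ≤ (b ∩ S').card → b ⊆ S' := by
      intro b hb h2
      obtain ⟨p, hp, q, hq, hpq⟩ := Finset.one_lt_card.mp h2
      rw [Finset.mem_inter, hS', Finset.mem_filter] at hp hq
      have hxp : x p = 0 := hp.2.2
      have hxq : x q = 0 := hq.2.2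
      have hbeq := (thirdPt_spec hB hpq).2.2.2 b hb hp.1 hq.1
      have hsumpq := thirdPt_sum hB hxblocks hpq
      rw [hxp, hxq] at hsumpq
      have hxt : x (thirdPt B hB p q) = 0 := by linear_combination hsumpq
      rw [hbeq]
      intro z hz
      simp only [Finset.mem_insert, Finset.mem_singleton] at hz
      rw [hS', Finset.mem_filter]
      rcases hz with rfl | rfl | rfl
      · exact ⟨Finset.mem_univ _, hxp⟩
      · exact ⟨Finset.mem_univ _, hxq⟩
      · exact ⟨Finset.mem_univ _, hxt⟩
    -- cardinality of S'
    have hcd : x u + 0 + 1 = 0 := by rw [hu1]; decide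
    have hcount := card_fibers hB hxblocks u 0 1 hcd
    have e1 : (Finset.univ.filter fun w => w ≠ u ∧ x w = 0) = S' := by
      rw [hS']
      apply Finset.filter_congr
      intro w _
      simp only [ne_eq, and_iff_right_iff_imp]
      intro hwc hwu
      rw [hwu, hu1] at hwc
      exact one_ne_zero hwc
    have e2 : (Finset.univ.filter fun w => x w = (1 : ZMod 2))
        = insert u (Finset.univ.filter fun w => w ≠ u ∧ x w = 1) := by
      ext z
      simp only [Finset.mem_filter, Finset.mem_univ, true_and, Finset.mem_insert, ne_eq]
      constructor
      · intro hz
        by_cases hzu : z = u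
        · exact Or.inl hzu
        · exact Or.inr ⟨hzu, hz⟩
      · rintro (rfl | ⟨_, hz⟩)
        · exact hu1
        · exact hz
    have hucard : (Finset.univ.filter fun w => x w = (1 : ZMod 2)).card
        = (Finset.univ.filter fun w => w ≠ u ∧ x w = 1).card + 1 := by
      rw [e2, Finset.card_insert_of_notMem (by simp)]
    have hfib : v = S'.card + (Finset.univ.filter fun w => x w = (1 : ZMod 2)).card := by
      have hfw := Finset.card_eq_sum_card_fiberwise
        (f := x) (s := Finset.univ) (t := Finset.univ) (fun y _ => Finset.mem_univ _)
      have huniv2 : (Finset.univ : Finset (ZMod 2)) = {0, 1} := by decide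
      rw [huniv2, Finset.sum_insert (by decide), Finset.sum_singleton] at hfw
      simpa [hS'] using hfw
    rw [e1] at hcount
    have hv2 : v = 2 * S'.card + 1 := by omega
    have hScard : S'.card = (v - 1) / 2 := by omega
    have hproper : S' ≠ Finset.univ := by
      intro h
      have : u ∈ S' := h ▸ Finset.mem_univ u
      rw [hS', Finset.mem_filter] at this
      rw [this.2] at hu1
      exact one_ne_zero hu1.symm
    refine ⟨⟨S', hScard, hproper, hsub⟩, ?_⟩
    -- parity of |S'|
    obtain ⟨u0, hu0⟩ : S'.Nonempty := Finset.card_pos.mp (by omega)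
    have heven : Even (S'.erase u0).card := by
      refine even_card_invol _ (fun w => thirdPt B hB u0 w) ?_ ?_ ?_
      · intro w hw
        rw [Finset.mem_erase] at hw
        have huw : u0 ≠ w := Ne.symm hw.1
        obtain ⟨t1, t2, t3, _⟩ := thirdPt_spec hB huw
        have hblk : 2 ≤ (({u0, w, thirdPt B hB u0 w} : Finset (Fin v)) ∩ S').card := by
          refine Finset.one_lt_card.mpr ⟨u0, ?_, w, ?_, huw⟩
          · exact Finset.mem_inter.mpr ⟨by simp, hu0⟩
          · exact Finset.mem_inter.mpr ⟨by simp, hw.2⟩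
        have hin := hsub _ t3 hblk
        exact Finset.mem_erase.mpr ⟨t1, hin (by simp)⟩
      · intro w hw
        rw [Finset.mem_erase] at hw
        exact thirdPt_invol hB (Ne.symm hw.1)
      · intro w hw
        rw [Finset.mem_erase] at hw
        exact (thirdPt_spec hB (Ne.symm hw.1)).2.1
    rw [Finset.card_erase_of_mem hu0] at heven
    obtain ⟨k, hk⟩ := heven
    omega
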